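/- Let R > 0, β > −2π, and let h : [0,R] → ℝ be C¹ with h(0) = 0 and h(R) ≠ 0. Then 2π ∫₀^R (h′(r)² + h(r)²/r²) r dr + β h(R)² > 0. -/

import Mathlib

open Real MeasureTheory Set intervalIntegral

/-- strict positivity of the Robin Rayleigh-quotient numerator. -/
theorem robin_numerator_pos (R β : ℝ) (hR : 0 < R) (hβ : -(2 * π) < β)
    (h : ℝ → ℝ) (hC1 : ContDiffOn ℝ 1 h (Set.Icc 0 R)) (h0 : h 0 = 0)
    (hR0 : h R ≠ 0) :
    0 < 2 * π * (∫ r in (0 : ℝ)..R, ((deriv h r) ^ 2 + (h r) ^ 2 / r ^ 2) * r)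
        + β * (h R) ^ 2 := by
  set φ := derivWithin h (Set.Icc 0 R) with hφdef
  have hdiff : DifferentiableOn ℝ h (Set.Icc 0 R) := hC1.differentiableOn one_ne_zero
  have hφc : ContinuousOn φ (Set.Icc 0 R) :=
    hC1.continuousOn_derivWithin (uniqueDiffOn_Icc hR) le_rfl
  obtain ⟨M, hM⟩ := isCompact_Icc.exists_bound_of_continuousOn hφc
  have hM0 : 0 ≤ M := le_trans (norm_nonneg _) (hM 0 ⟨le_rfl, hR.le⟩)
  -- deriv = φ on the interior, and h is differentiable there
  have hder : ∀ r ∈ Set.Ioo 0 R, HasDerivAt h (deriv h r) r ∧ deriv h r = φ r := by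
    intro r hr
    have hmem : Set.Icc 0 R ∈ nhds r := Icc_mem_nhds hr.1 hr.2
    have hd : DifferentiableAt ℝ h r := (hdiff r ⟨hr.1.le, hr.2.le⟩).differentiableAt hmem
    exact ⟨hd.hasDerivAt, (derivWithin_of_mem_nhds hmem).symm⟩
  -- Lipschitz bound |h r| ≤ M * r
  have hlip : ∀ r ∈ Set.Icc 0 R, |h r| ≤ M * r := by
    intro r hr
    have := Convex.norm_image_sub_le_of_norm_derivWithin_le hdiff hM (convex_Icc 0 R)
      (⟨le_rfl, hR.le⟩ : (0:ℝ) ∈ Set.Icc 0 R) hr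
    simpa [h0, abs_of_nonneg hr.1, Real.norm_eq_abs] using this
  set F₁ : ℝ → ℝ := fun r => ((deriv h r) ^ 2 + (h r) ^ 2 / r ^ 2) * r with hF₁
  set F₂ : ℝ → ℝ := fun r => 2 * h r * deriv h r with hF₂
  -- continuity of deriv h on the open interval
  have hderc : ContinuousOn (deriv h) (Set.Ioo 0 R) := by
    apply (hφc.mono Ioo_subset_Icc_self).congr
    intro r hr; exact (hder r hr).2
  have hhc : ContinuousOn h (Set.Icc 0 R) := hC1.continuousOn
  -- Integrability of F₁
  have hint1 : IntervalIntegrable F₁ volume 0 R := by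
    rw [intervalIntegrable_iff, uIoc_of_le hR.le, integrableOn_Ioc_iff_integrableOn_Ioo]
    have hcontF₁ : ContinuousOn F₁ (Set.Ioo 0 R) := by
      apply ContinuousOn.mul _ continuousOn_id
      apply ContinuousOn.add (hderc.pow 2)
      apply ContinuousOn.div ((hhc.mono Ioo_subset_Icc_self).pow 2)
        (continuousOn_pow 2)
      intro r hr; exact pow_ne_zero 2 (ne_of_gt hr.1)
    refine Integrable.mono' (g := fun _ => M ^ 2 * R + M ^ 2 * R)
      (integrableOn_const measure_Ioo_lt_top.ne)
      (hcontF₁.aestronglyMeasurable measurableSet_Ioo) ?_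
    rw [ae_restrict_iff' measurableSet_Ioo]
    filter_upwards with r hr
    have hr0 : 0 < r := hr.1
    have h1 : |deriv h r| ≤ M := by rw [(hder r hr).2]; exact hM r ⟨hr.1.le, hr.2.le⟩
    have h2 : |h r| ≤ M * r := hlip r ⟨hr.1.le, hr.2.le⟩
    have e1 : (deriv h r) ^ 2 * r ≤ M ^ 2 * R := by
      have : (deriv h r) ^ 2 ≤ M ^ 2 := by nlinarith [abs_nonneg (deriv h r), neg_abs_le (deriv h r), le_abs_self (deriv h r)]
      nlinarith [hr.2, sq_nonneg (deriv h r)]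
    have e2 : (h r) ^ 2 / r ^ 2 * r ≤ M ^ 2 * R := by
      rw [div_mul_eq_mul_div, div_le_iff₀ (by positivity)]
      have : (h r) ^ 2 ≤ (M * r) ^ 2 := by nlinarith [abs_nonneg (h r), neg_abs_le (h r), le_abs_self (h r)]
      nlinarith [hr.2, sq_nonneg (h r), sq_nonneg M, hr0.le]
    have hnn : 0 ≤ F₁ r := by
      have : 0 ≤ (deriv h r) ^ 2 + (h r) ^ 2 / r ^ 2 := by positivity
      exact mul_nonneg this hr0.le
    rw [Real.norm_eq_abs, abs_of_nonneg hnn]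
    simp only [hF₁]
    nlinarith [e1, e2]
  -- Integrability of F₂
  have hint2 : IntervalIntegrable F₂ volume 0 R := by
    rw [intervalIntegrable_iff, uIoc_of_le hR.le, integrableOn_Ioc_iff_integrableOn_Ioo]
    have hcontF₂ : ContinuousOn F₂ (Set.Ioo 0 R) :=
      ((continuousOn_const.mul (hhc.mono Ioo_subset_Icc_self)).mul hderc)
    refine Integrable.mono' (g := fun _ => 2 * (M * R) * M)
      (integrableOn_const measure_Ioo_lt_top.ne)
      (hcontF₂.aestronglyMeasurable measurableSet_Ioo) ?_
    rw [ae_restrict_iff' measurableSet_Ioo]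
    filter_upwards with r hr
    have h1 : |deriv h r| ≤ M := by rw [(hder r hr).2]; exact hM r ⟨hr.1.le, hr.2.le⟩
    have h2 : |h r| ≤ M * r := hlip r ⟨hr.1.le, hr.2.le⟩
    have h3 : |h r| ≤ M * R := h2.trans (by nlinarith [hr.2])
    calc ‖F₂ r‖ = 2 * |h r| * |deriv h r| := by
          simp only [hF₂, Real.norm_eq_abs, abs_mul]
          rw [abs_of_nonneg (by norm_num : (0:ℝ) ≤ 2)]
      _ ≤ 2 * (M * R) * M := by
          have := abs_nonneg (h r); have := abs_nonneg (deriv h r)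
          nlinarith
  -- FTC: ∫ F₂ = h R ^ 2 - h 0 ^ 2
  have hFTC : (∫ r in (0:ℝ)..R, F₂ r) = h R ^ 2 := by
    have := intervalIntegral.integral_eq_sub_of_hasDeriv_right_of_le hR.le
      (f := fun r => h r ^ 2) (f' := F₂) ((hhc.pow 2)) ?_ hint2
    · rw [this]; simp [h0]
    · intro r hr
      have hd : HasDerivAt (fun x => h x ^ 2) (F₂ r) r := by
        have := ((hder r hr).1).fun_pow 2
        exact this.congr_deriv (by
        simp only [hF₂]; push_cast; ring)
      exact hd.hasDerivWithinAt
  -- pointwise comparison F₂ ≤ F₁ on [0, R]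
  have hle : ∀ r ∈ Set.Icc (0:ℝ) R, F₂ r ≤ F₁ r := by
    intro r hr
    rcases eq_or_lt_of_le hr.1 with heq | hpos
    · simp [hF₁, hF₂, ← heq, h0]
    · have key : F₁ r - F₂ r = (deriv h r * r - h r) ^ 2 / r := by
        simp only [hF₁, hF₂]
        field_simp
        ring
      nlinarith [div_nonneg (sq_nonneg (deriv h r * r - h r)) hpos.le, key]
  have hmono : h R ^ 2 ≤ ∫ r in (0:ℝ)..R, F₁ r := by
    rw [← hFTC]
    exact intervalIntegral.integral_mono_on hR.le hint2 hint1 hle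
  have hR2 : 0 < h R ^ 2 := by positivity
  have hπ : 0 < π := Real.pi_pos
  nlinarith [hmono, hR2, hπ, hβ]
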